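/- (Symplectic Eigenskeleton, Part 4, planar case.) Let Φ be a symplectic 2n×2n real matrix (Φᵀ J_{2n} Φ = J_{2n}), Ψ = Φᵀ Φ, and let ξ ∈ ℝ^{2n} be a unit eigenvector of Ψ (Ψξ = λξ, ‖ξ‖ = 1). Then the area of the parallelogram spanned by Φξ and Φ(J_{2n}ξ) equals 1, the area of the parallelogram spanned by ξ and J_{2n}ξ: explicitly, ‖Φξ‖²·‖Φ(J_{2n}ξ)‖² − ⟨Φξ, Φ(J_{2n}ξ)⟩² = 1. Thus Φ preserves the area of any area element parallel to a symplectic eigenskeleton plane. -/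

import Mathlib

open Matrix

/-- The standard symplectic matrix `J` on `ℝ^{2m}`, with coordinates ordered in
symplectic pairs `(p₁,q₁,…,p_m,q_m)`. -/
def symplJ (m : ℕ) : Matrix (Fin (2 * m)) (Fin (2 * m)) ℝ :=
  Matrix.of fun i j =>
    if i.val + 1 = j.val ∧ i.val % 2 = 0 then (-1 : ℝ)
    else if j.val + 1 = i.val ∧ j.val % 2 = 0 then 1 else 0

lemma symplJ_transpose (m : ℕ) : (symplJ m)ᵀ = -symplJ m := by
  ext i j
  simp only [transpose_apply, symplJ, Matrix.of_apply, Matrix.neg_apply]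
  split_ifs <;> (try norm_num) <;> (try simp_all) <;> omega

lemma symplJ_mul_self (m : ℕ) : symplJ m * symplJ m = -1 := by
  ext i j
  simp only [mul_apply, Matrix.neg_apply, one_apply]
  have hi := i.isLt
  by_cases he : i.val % 2 = 0
  · have h1 : i.val + 1 < 2 * m := by omega
    rw [Finset.sum_eq_single (⟨i.val + 1, h1⟩ : Fin (2 * m))]
    · simp only [symplJ, Matrix.of_apply, Fin.ext_iff]
      split_ifs <;> (try norm_num) <;> (try simp_all) <;> omega
    · intro b _ hb
      have hb' : b.val ≠ i.val + 1 := fun h => hb (Fin.ext h)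
      simp only [symplJ, Matrix.of_apply]
      split_ifs <;> (try norm_num) <;> (try simp_all) <;> omega
    · simp
  · have h1 : i.val - 1 < 2 * m := by omega
    rw [Finset.sum_eq_single (⟨i.val - 1, h1⟩ : Fin (2 * m))]
    · simp only [symplJ, Matrix.of_apply, Fin.ext_iff]
      split_ifs <;> (try norm_num) <;> (try simp_all) <;> omega
    · intro b _ hb
      have hb' : b.val ≠ i.val - 1 := fun h => hb (Fin.ext h)
      simp only [symplJ, Matrix.of_apply]
      split_ifs <;> (try norm_num) <;> (try simp_all) <;> omega
    · simp

/-- **Symplectic Eigenskeleton, Part 4 (planar case).**  Let `Φ` be symplectic,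
`Ψ = Φᵀ Φ`, and let `ξ` be a unit eigenvector of `Ψ`.  Then the squared area
(Gram determinant) of the parallelogram spanned by `Φξ` and `Φ(Jξ)` equals `1`,
the area of the parallelogram spanned by `ξ` and `Jξ`: `Φ` preserves the area
of any area element parallel to a symplectic eigenskeleton plane. -/
theorem eigenskeleton_plane_area_preserved (n : ℕ)
    (Φ : Matrix (Fin (2 * n)) (Fin (2 * n)) ℝ)
    (hΦ : Φᵀ * symplJ n * Φ = symplJ n)
    (ξ : Fin (2 * n) → ℝ) (lam : ℝ)
    (heig : (Φᵀ * Φ).mulVec ξ = lam • ξ) (hunit : ξ ⬝ᵥ ξ = 1) :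
    (Φ.mulVec ξ ⬝ᵥ Φ.mulVec ξ) *
        (Φ.mulVec ((symplJ n).mulVec ξ) ⬝ᵥ Φ.mulVec ((symplJ n).mulVec ξ)) -
      (Φ.mulVec ξ ⬝ᵥ Φ.mulVec ((symplJ n).mulVec ξ)) ^ 2 = 1 := by
  set J := symplJ n with hJdef
  have hJT : Jᵀ = -J := symplJ_transpose n
  have hJJ : J * J = -1 := symplJ_mul_self n
  -- left inverse of Φ
  have hleft : (-J * Φᵀ * J) * Φ = 1 := by
    have h1 : (-J * Φᵀ * J) * Φ = -J * (Φᵀ * J * Φ) := by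
      simp only [Matrix.neg_mul, Matrix.mul_assoc]
    rw [h1, hΦ, Matrix.neg_mul, hJJ, neg_neg]
  have hright : Φ * (-J * Φᵀ * J) = 1 := mul_eq_one_comm.mp hleft
  have hΦJΦT : Φ * J * Φᵀ = J := by
    have h2 : Φ * (-J * Φᵀ * J) * (-J) = 1 * (-J) := by rw [hright]
    simp only [Matrix.neg_mul, Matrix.mul_neg, neg_neg, Matrix.one_mul,
      Matrix.mul_assoc] at h2
    rw [hJJ] at h2
    simp only [Matrix.mul_neg, Matrix.mul_one, neg_neg, neg_inj] at h2
    rw [Matrix.mul_assoc]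
    exact h2
  have hΨJΨ : (Φᵀ * Φ) * J * (Φᵀ * Φ) = J := by
    have : (Φᵀ * Φ) * J * (Φᵀ * Φ) = Φᵀ * (Φ * J * Φᵀ) * Φ := by
      simp only [Matrix.mul_assoc]
    rw [this, hΦJΦT, hΦ]
  -- Gram identity
  have hgram : ∀ (A : Matrix (Fin (2*n)) (Fin (2*n)) ℝ) (a b : Fin (2*n) → ℝ),
      A.mulVec a ⬝ᵥ A.mulVec b = a ⬝ᵥ (Aᵀ * A).mulVec b := by
    intro A a b
    have hv : Matrix.vecMul a (Aᵀ * A) = Matrix.vecMul (A.mulVec a) A := by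
      rw [← Matrix.vecMul_vecMul, Matrix.vecMul_transpose]
    rw [Matrix.dotProduct_mulVec, Matrix.dotProduct_mulVec, hv]
  set η := J.mulVec ξ with hηdef
  have hJTJ : Jᵀ * J = 1 := by rw [hJT, Matrix.neg_mul, hJJ, neg_neg]
  have hη1 : η ⬝ᵥ η = 1 := by
    rw [hηdef, hgram, hJTJ, Matrix.one_mulVec, hunit]
  have hξη : ξ ⬝ᵥ η = 0 := by
    have h3 : ξ ⬝ᵥ (J.mulVec ξ) = (Jᵀ.mulVec ξ) ⬝ᵥ ξ := by
      rw [Matrix.dotProduct_mulVec, ← Matrix.mulVec_transpose]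
    rw [hJT, Matrix.neg_mulVec, neg_dotProduct, dotProduct_comm] at h3
    have h0 : J *ᵥ ξ ⬝ᵥ ξ = 0 := by linarith
    rw [hηdef, dotProduct_comm]
    exact h0
  have hΨη : lam • ((Φᵀ * Φ).mulVec η) = η := by
    have h4 : (Φᵀ*Φ).mulVec (J.mulVec ((Φᵀ*Φ).mulVec ξ)) = J.mulVec ξ := by
      have hΨJΨ' : Φᵀ * Φ * J * Φᵀ * Φ = J := by
        rw [Matrix.mul_assoc (Φᵀ * Φ * J)]; exact hΨJΨ
      rw [Matrix.mulVec_mulVec, Matrix.mulVec_mulVec, ← Matrix.mul_assoc, hΨJΨ']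
    rw [heig, Matrix.mulVec_smul, Matrix.mulVec_smul] at h4
    exact h4
  have hlam : lam ≠ 0 := by
    intro h0
    rw [h0, zero_smul] at hΨη
    rw [← hΨη] at hη1
    simp at hη1
  have hA : Φ.mulVec ξ ⬝ᵥ Φ.mulVec ξ = lam := by
    rw [hgram, heig, dotProduct_smul, smul_eq_mul, hunit, mul_one]
  have hB : lam * (Φ.mulVec η ⬝ᵥ Φ.mulVec η) = 1 := by
    rw [hgram, ← smul_eq_mul, ← dotProduct_smul, hΨη, hη1]
  have hC : Φ.mulVec ξ ⬝ᵥ Φ.mulVec η = 0 := by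
    have h5 : lam * (Φ.mulVec ξ ⬝ᵥ Φ.mulVec η) = 0 := by
      rw [hgram, ← smul_eq_mul, ← dotProduct_smul, hΨη, hξη]
    rcases mul_eq_zero.mp h5 with h | h
    · exact absurd h hlam
    · exact h
  rw [hA, hC]
  rw [show η = J.mulVec ξ from rfl] at hB
  rw [hB]
  norm_num
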